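/- If the polynomial $f(x_1,x_2,x_3) = v_0 x_1^6 + v_6(x_2^6 + 30 x_1 x_2^4 x_3 + 90 x_1^2 x_2^2 x_3^2 + 20 x_1^3 x_3^3) + v_{12} x_3^6$ with $v_0, v_6, v_{12} \ge 0$ is nonnegative for all $(x_1,x_2,x_3) \in \mathbb{R}^3$, then $\sqrt{v_0 v_{12}} \ge (560 + 70\sqrt{70}) v_6$. -/

import Mathlib

theorem stmt_2 (v0 v6 v12 : ℝ) (hv0 : 0 ≤ v0) (hv6 : 0 ≤ v6) (hv12 : 0 ≤ v12)
    (h : ∀ x1 x2 x3 : ℝ,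
      0 ≤ v0 * x1 ^ 6 +
          v6 * (x2 ^ 6 + 30 * x1 * x2 ^ 4 * x3 + 90 * x1 ^ 2 * x2 ^ 2 * x3 ^ 2 +
            20 * x1 ^ 3 * x3 ^ 3) + v12 * x3 ^ 6) :
    Real.sqrt (v0 * v12) ≥ (560 + 70 * Real.sqrt 70) * v6 := by
  rcases eq_or_lt_of_le hv6 with hv6' | hv6'
  · rw [← hv6']
    simpa using Real.sqrt_nonneg (v0 * v12)
  · -- v6 > 0. First show v0 > 0 and v12 > 0.
    have hv0' : 0 < v0 := by
      rcases eq_or_lt_of_le hv0 with h0 | h0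
      · exfalso
        have hM1 : (1:ℝ) ≤ v12 / v6 + 1 := by
          have := div_nonneg hv12 hv6'.le; linarith
        have hMv : v6 * (v12 / v6 + 1) = v12 + v6 := by field_simp
        have hd : 0 ≤ v12 / v6 := div_nonneg hv12 hv6'.le
        have hM3 : (v12 / v6 + 1) ≤ (v12 / v6 + 1) ^ 3 := by
          nlinarith [mul_nonneg (mul_nonneg hd hd) hd, mul_nonneg hd hd]
        have hM3' := mul_le_mul_of_nonneg_left hM3 hv6'.le
        have key := h (-(v12 / v6 + 1)) 0 1
        rw [← h0] at key
        nlinarith [key]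
      · exact h0
    have hv12' : 0 < v12 := by
      rcases eq_or_lt_of_le hv12 with h0 | h0
      · exfalso
        have hM1 : (1:ℝ) ≤ v0 / v6 + 1 := by
          have := div_nonneg hv0 hv6'.le; linarith
        have hMv : v6 * (v0 / v6 + 1) = v0 + v6 := by field_simp
        have hd : 0 ≤ v0 / v6 := div_nonneg hv0 hv6'.le
        have hM3 : (v0 / v6 + 1) ≤ (v0 / v6 + 1) ^ 3 := by
          nlinarith [mul_nonneg (mul_nonneg hd hd) hd, mul_nonneg hd hd]
        have hM3' := mul_le_mul_of_nonneg_left hM3 hv6'.le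
        have key := h 1 0 (-(v0 / v6 + 1))
        rw [← h0] at key
        nlinarith [key]
      · exact h0
    -- main case
    obtain ⟨L, hLdef⟩ : ∃ L : ℝ, L = (v12 / v0) ^ ((1:ℝ)/12) := ⟨_, rfl⟩
    have hdiv : 0 < v12 / v0 := div_pos hv12' hv0'
    have hL : 0 < L := hLdef ▸ Real.rpow_pos_of_pos hdiv _
    have hL6 : L ^ 6 = Real.sqrt (v12 / v0) := by
      rw [hLdef, ← Real.rpow_natCast ((v12/v0) ^ ((1:ℝ)/12)) 6,
        ← Real.rpow_mul hdiv.le, Real.sqrt_eq_rpow]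
      norm_num
    have hs70 : (Real.sqrt 70) ^ 2 = 70 := Real.sq_sqrt (by norm_num)
    have hs70n : 0 ≤ Real.sqrt 70 := Real.sqrt_nonneg 70
    obtain ⟨s, hsdef⟩ : ∃ s : ℝ, s = 10 + Real.sqrt 70 := ⟨_, rfl⟩
    have hs : 0 ≤ s := by rw [hsdef]; positivity
    have hx2 : (Real.sqrt s) ^ 2 = s := Real.sq_sqrt hs
    obtain ⟨c, hcdef⟩ : ∃ c : ℝ, c = Real.sqrt (v0 * v12) := ⟨_, rfl⟩
    have hA : v0 * L ^ 6 = c := by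
      rw [hL6, hcdef, show v0 * v12 = v0 ^ 2 * (v12 / v0) by field_simp,
        Real.sqrt_mul (sq_nonneg v0), Real.sqrt_sq hv0'.le]
    have hB : v12 * (1/L) ^ 6 = c := by
      have hL6pos : 0 < L ^ 6 := by positivity
      have hcl : c * L ^ 6 = v12 := by
        rw [hL6, hcdef, ← Real.sqrt_mul (mul_nonneg hv0'.le hv12'.le),
          show v0 * v12 * (v12 / v0) = v12 ^ 2 by field_simp,
          Real.sqrt_sq hv12'.le]
      field_simp
      linarith [hcl]
    have key := h (-L) (Real.sqrt s) (1/L)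
    have hLne : L ≠ 0 := hL.ne'
    have e2 : (Real.sqrt s) ^ 6 = s ^ 3 := by
      rw [show (6:ℕ) = 2 * 3 by norm_num, pow_mul, hx2]
    have e4 : (Real.sqrt s) ^ 4 = s ^ 2 := by
      rw [show (4:ℕ) = 2 * 2 by norm_num, pow_mul, hx2]
    have e6 : v0 * (-L) ^ 6 + v6 * ((Real.sqrt s) ^ 6 + 30 * (-L) * (Real.sqrt s) ^ 4 * (1/L)
        + 90 * (-L) ^ 2 * (Real.sqrt s) ^ 2 * (1/L) ^ 2 + 20 * (-L) ^ 3 * (1/L) ^ 3)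
        + v12 * (1/L) ^ 6
        = 2 * c + v6 * (s ^ 3 - 30 * s ^ 2 + 90 * s - 20) := by
      rw [e2, e4, hx2, show v0 * (-L) ^ 6 = v0 * L ^ 6 by ring, hA]
      rw [show v12 * (1/L) ^ 6 = c from hB]
      field_simp
      ring
    rw [e6] at key
    have hval : s ^ 3 - 30 * s ^ 2 + 90 * s - 20 = -1120 - 140 * Real.sqrt 70 := by
      rw [hsdef]; linear_combination Real.sqrt 70 * hs70
    rw [hval] at key
    have hc0 : 2 * c ≥ (1120 + 140 * Real.sqrt 70) * v6 := by nlinarith [key]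
    rw [← hcdef]
    linarith
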